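/- Let 0 ≤ ρ₀ < ρ₁ < ∞ and let Z : [ρ₀, ρ₁] → [0, ∞) be a bounded function satisfying Z(ρ) ≤ θ·Z(r) + A/(r − ρ)^α + B/(r − ρ)^β + C for all ρ₀ ≤ ρ < r ≤ ρ₁, where θ ∈ (0, 1), A, B, C ≥ 0 and α > β > 0. Then there exists a constant κ > 0, depending only on α and θ, such that Z(ρ₀) ≤ κ·(A/(ρ₁ − ρ₀)^α + B/(ρ₁ − ρ₀)^β + C). -/

import Mathlib

set_option maxHeartbeats 1000000

private lemma geo_aux (r : ℝ) (h0 : 0 ≤ r) (h1 : r < 1) (n : ℕ) :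
    ∑ i ∈ Finset.range n, r^i ≤ 1/(1-r) := by
  rw [geom_sum_eq (by linarith)]
  rw [show (r^n - 1)/(r-1) = (1-r^n)/(1-r) by rw [← neg_div_neg_eq]; ring_nf]
  apply div_le_div₀ (by norm_num) (by nlinarith [pow_nonneg h0 n]) (by linarith) le_rfl

private lemma pow_rpow_comm (x : ℝ) (hx : 0 < x) (k : ℕ) (a : ℝ) :
    (x ^ k) ^ a = (x ^ a) ^ k := by
  rw [← Real.rpow_natCast x k, ← Real.rpow_mul hx.le, mul_comm, Real.rpow_mul hx.le,
    Real.rpow_natCast]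

/-- **Giusti's iteration lemma.** Let `0 ≤ ρ₀ < ρ₁ < ∞` and let
`Z : [ρ₀, ρ₁] → [0, ∞)` be a bounded function satisfying
`Z(ρ) ≤ θ·Z(r) + A/(r − ρ)^α + B/(r − ρ)^β + C` for all `ρ₀ ≤ ρ < r ≤ ρ₁`,
where `θ ∈ (0, 1)`, `A, B, C ≥ 0` and `α > β > 0`. Then there exists a constant
`κ > 0`, depending only on `α` and `θ`, such that
`Z(ρ₀) ≤ κ·(A/(ρ₁ − ρ₀)^α + B/(ρ₁ − ρ₀)^β + C)`. -/
theorem stmt2 (α θ : ℝ) (hθ : θ ∈ Set.Ioo (0:ℝ) 1) :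
    ∃ κ : ℝ, 0 < κ ∧
      ∀ (β : ℝ), 0 < β → β < α →
      ∀ (ρ₀ ρ₁ : ℝ), 0 ≤ ρ₀ → ρ₀ < ρ₁ →
      ∀ (Z : ℝ → ℝ) (A B C : ℝ), 0 ≤ A → 0 ≤ B → 0 ≤ C →
      (∀ ρ ∈ Set.Icc ρ₀ ρ₁, 0 ≤ Z ρ) →
      (∃ K : ℝ, ∀ ρ ∈ Set.Icc ρ₀ ρ₁, Z ρ ≤ K) →
      (∀ ρ r : ℝ, ρ₀ ≤ ρ → ρ < r → r ≤ ρ₁ →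
        Z ρ ≤ θ * Z r + A / (r - ρ) ^ α + B / (r - ρ) ^ β + C) →
      Z ρ₀ ≤ κ * (A / (ρ₁ - ρ₀) ^ α + B / (ρ₁ - ρ₀) ^ β + C) := by
  obtain ⟨hθ0, hθ1⟩ := hθ
  by_cases hα : 0 < α
  · -- main case
    set τ : ℝ := θ ^ (1/(2*α)) with hτdef
    have hτ0 : 0 < τ := Real.rpow_pos_of_pos hθ0 _
    have hτ1 : τ < 1 := Real.rpow_lt_one hθ0.le hθ1 (by positivity)
    set q : ℝ := θ ^ (1/2 : ℝ) with hqdef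
    have hq0 : 0 < q := Real.rpow_pos_of_pos hθ0 _
    have hq1 : q < 1 := Real.rpow_lt_one hθ0.le hθ1 (by norm_num)
    have hτα : τ ^ α = q := by
      rw [hτdef, ← Real.rpow_mul hθ0.le]
      congr 1
      field_simp
    have hθqq : θ = q * q := by
      rw [hqdef, ← Real.rpow_add hθ0]
      norm_num
    have hθq : θ ≤ q := by nlinarith
    refine ⟨(1-τ) ^ (-α) / (1 - q), div_pos (Real.rpow_pos_of_pos (by linarith) _) (by linarith),
      ?_⟩
    intro β hβ hβα ρ₀ ρ₁ hρ₀ hρ Z A B C hA hB hC hZnn ⟨K, hK⟩ hiter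
    set d : ℝ := ρ₁ - ρ₀ with hddef
    have hd : 0 < d := by simp [hddef]; linarith
    have hτβq : q ≤ τ ^ β := by
      rw [hτdef, ← Real.rpow_mul hθ0.le, hqdef]
      apply Real.rpow_le_rpow_of_exponent_ge hθ0 hθ1.le
      rw [div_mul_eq_mul_div, div_le_div_iff₀ (by positivity) (by norm_num)]
      nlinarith
    have hτβ0 : 0 < τ ^ β := Real.rpow_pos_of_pos hτ0 _
    -- the radii
    set t : ℕ → ℝ := fun k => ρ₁ - τ^k * d with htdef
    have htmem : ∀ k, t k ∈ Set.Icc ρ₀ ρ₁ := by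
      intro k
      have h1 : τ^k ≤ 1 := pow_le_one₀ hτ0.le hτ1.le
      have h2 : 0 ≤ τ^k := pow_nonneg hτ0.le k
      constructor
      · simp only [htdef, hddef]; nlinarith
      · simp only [htdef, hddef]; nlinarith
    have hstep : ∀ k, t (k+1) - t k = τ^k * ((1-τ) * d) := by
      intro k; simp only [htdef]; ring
    have hlt : ∀ k, t k < t (k+1) := by
      intro k
      have h1 := hstep k
      have h2 : 0 < τ^k * ((1-τ)*d) :=
        mul_pos (pow_pos hτ0 k) (mul_pos (by linarith) hd)
      linarith
    set E1 : ℝ := ((1-τ) * d) ^ α with hE1def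
    set E2 : ℝ := ((1-τ) * d) ^ β with hE2def
    have hE1 : 0 < E1 := Real.rpow_pos_of_pos (by nlinarith) _
    have hE2 : 0 < E2 := Real.rpow_pos_of_pos (by nlinarith) _
    set M : ℝ := A / E1 + B / E2 + C with hMdef
    have hM : 0 ≤ M := by positivity
    -- key bound on the error term at step k
    have hkey : ∀ k : ℕ, θ^k * (A / (t (k+1) - t k) ^ α + B / (t (k+1) - t k) ^ β + C)
        ≤ q^k * M := by
      intro k
      rw [hstep k]
      have hτk : 0 < τ^k := pow_pos hτ0 k
      have hpos : (0:ℝ) < (1-τ)*d := by nlinarith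
      rw [Real.mul_rpow (le_of_lt hτk) hpos.le, Real.mul_rpow (le_of_lt hτk) hpos.le]
      rw [pow_rpow_comm τ hτ0 k α, pow_rpow_comm τ hτ0 k β, hτα]
      have hqk : (q:ℝ)^k ≠ 0 := by positivity
      have e1 : θ^k * (A / (q^k * E1)) = q^k * (A / E1) := by
        rw [div_mul_eq_div_div, ← mul_div_assoc, ← mul_div_assoc]
        congr 1
        rw [show θ^k * A = (q*q)^k * A by rw [← hθqq], mul_pow]
        field_simp
      have e2 : θ^k * (B / ((τ^β)^k * E2)) ≤ q^k * (B / E2) := by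
        rw [div_mul_eq_div_div, ← mul_div_assoc]
        rw [show θ^k * (B / (τ^β)^k) = (θ/τ^β)^k * B by rw [div_pow]; ring]
        have h2 : θ / τ^β ≤ q := by
          rw [div_le_iff₀ hτβ0, hθqq]
          nlinarith
        have h3 : (θ/τ^β)^k ≤ q^k := pow_le_pow_left₀ (by positivity) h2 k
        rw [show q^k * (B/E2) = q^k * B / E2 from (mul_div_assoc _ _ _).symm]
        apply div_le_div₀ (by positivity) _ hE2 le_rfl
        nlinarith [pow_nonneg (show (0:ℝ) ≤ θ/τ^β by positivity) k]
      have e3 : θ^k * C ≤ q^k * C := by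
        have := pow_le_pow_left₀ hθ0.le hθq k
        nlinarith
      have expand : θ^k * (A / (q^k * E1) + B / ((τ^β)^k * E2) + C)
          = θ^k * (A / (q^k * E1)) + θ^k * (B / ((τ^β)^k * E2)) + θ^k * C := by ring
      have expand2 : q^k * M = q^k * (A/E1) + q^k * (B/E2) + q^k * C := by
        rw [hMdef]; ring
      rw [expand, expand2]
      linarith [e1, e2, e3]
    -- iterate
    have hind : ∀ k : ℕ, Z ρ₀ ≤ θ^k * Z (t k) + (∑ i ∈ Finset.range k, q^i) * M := by
      intro k
      induction k with
      | zero =>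
        have ht0 : t 0 = ρ₀ := by
          simp only [htdef, hddef, pow_zero, one_mul]; ring
        rw [ht0]; simp
      | succ k ih =>
        have hZk := hiter (t k) (t (k+1)) (htmem k).1 (hlt k) (htmem (k+1)).2
        have hθk : (0:ℝ) ≤ θ^k := pow_nonneg hθ0.le k
        have h1 : θ^k * Z (t k) ≤ θ^(k+1) * Z (t (k+1))
            + θ^k * (A/(t (k+1)-t k)^α + B/(t (k+1)-t k)^β + C) := by
          calc θ^k * Z (t k)
              ≤ θ^k * (θ * Z (t (k+1)) + (A/(t (k+1)-t k)^α + B/(t (k+1)-t k)^β + C)) := by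
                apply mul_le_mul_of_nonneg_left _ hθk
                linarith [hZk]
            _ = θ^(k+1) * Z (t (k+1))
                + θ^k * (A/(t (k+1)-t k)^α + B/(t (k+1)-t k)^β + C) := by ring
        have h2 := hkey k
        rw [Finset.sum_range_succ, add_mul]
        calc Z ρ₀ ≤ θ^k * Z (t k) + (∑ i ∈ Finset.range k, q^i) * M := ih
          _ ≤ (θ^(k+1) * Z (t (k+1))
                + θ^k * (A/(t (k+1)-t k)^α + B/(t (k+1)-t k)^β + C))
                + (∑ i ∈ Finset.range k, q^i) * M := add_le_add_left h1 _
          _ ≤ (θ^(k+1) * Z (t (k+1)) + q^k * M) + (∑ i ∈ Finset.range k, q^i) * M :=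
              by linarith [h2]
          _ = θ^(k+1) * Z (t (k+1)) + ((∑ i ∈ Finset.range k, q^i) * M + q^k * M) := by
              ring
    -- pass to the limit
    set K' : ℝ := max K 0 with hK'def
    have hchain : ∀ k : ℕ, Z ρ₀ ≤ θ^k * K' + (1/(1-q)) * M := by
      intro k
      have h1 : θ^k * Z (t k) ≤ θ^k * K' :=
        mul_le_mul_of_nonneg_left (le_trans (hK _ (htmem k)) (le_max_left _ _))
          (pow_nonneg hθ0.le k)
      have h2 : (∑ i ∈ Finset.range k, q^i) * M ≤ (1/(1-q)) * M :=
        mul_le_mul_of_nonneg_right (geo_aux q hq0.le hq1 k) hM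
      calc Z ρ₀ ≤ θ^k * Z (t k) + (∑ i ∈ Finset.range k, q^i) * M := hind k
        _ ≤ θ^k * K' + 1/(1-q) * M := add_le_add h1 h2
    have hlim : Filter.Tendsto (fun k : ℕ => θ^k * K' + (1/(1-q))*M) Filter.atTop
        (nhds (0 * K' + (1/(1-q))*M)) :=
      Filter.Tendsto.add
        ((tendsto_pow_atTop_nhds_zero_of_lt_one hθ0.le hθ1).mul_const _) tendsto_const_nhds
    have hfin : Z ρ₀ ≤ 1/(1-q) * M := by
      have := ge_of_tendsto' hlim hchain
      simpa using this
    -- compare M with the data at scale d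
    have h1τ : (0:ℝ) < 1 - τ := by linarith
    have hPα : (0:ℝ) < (1-τ)^α := Real.rpow_pos_of_pos h1τ _
    have hPβ : (0:ℝ) < (1-τ)^β := Real.rpow_pos_of_pos h1τ _
    have hnegα : (1-τ)^(-α) = ((1-τ)^α)⁻¹ := Real.rpow_neg h1τ.le _
    have hnegβ : (1-τ)^(-β) = ((1-τ)^β)⁻¹ := Real.rpow_neg h1τ.le _
    have hc1 : A/E1 = ((1-τ)^α)⁻¹ * (A/d^α) := by
      rw [hE1def, Real.mul_rpow h1τ.le hd.le]
      field_simp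
    have hc2 : B/E2 = ((1-τ)^β)⁻¹ * (B/d^β) := by
      rw [hE2def, Real.mul_rpow h1τ.le hd.le]
      field_simp
    have hmono : ((1-τ)^β)⁻¹ ≤ ((1-τ)^α)⁻¹ := by
      rw [← hnegα, ← hnegβ]
      exact Real.rpow_le_rpow_of_exponent_ge h1τ (by linarith) (by linarith)
    have hge1 : (1:ℝ) ≤ ((1-τ)^α)⁻¹ := by
      rw [← hnegα]
      exact Real.one_le_rpow_of_pos_of_le_one_of_nonpos h1τ (by linarith) (by linarith)
    have hMle : M ≤ ((1-τ)^α)⁻¹ * (A/d^α + B/d^β + C) := by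
      have hBd : (0:ℝ) ≤ B/d^β := div_nonneg hB (Real.rpow_pos_of_pos hd _).le
      have h2 : B/E2 ≤ ((1-τ)^α)⁻¹ * (B/d^β) := by
        rw [hc2]; exact mul_le_mul_of_nonneg_right hmono hBd
      have h3 : C ≤ ((1-τ)^α)⁻¹ * C := by nlinarith
      rw [hMdef, hc1]
      nlinarith [h2, h3]
    calc Z ρ₀ ≤ 1/(1-q) * M := hfin
      _ ≤ 1/(1-q) * (((1-τ)^α)⁻¹ * (A/d^α + B/d^β + C)) :=
          mul_le_mul_of_nonneg_left hMle (le_of_lt (div_pos one_pos (by linarith)))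
      _ = (1-τ)^(-α) / (1-q) * (A/d^α + B/d^β + C) := by rw [hnegα]; ring
  · exact ⟨1, one_pos, fun β hβ hβα => absurd (hβ.trans hβα) hα⟩
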